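/- Fix k bases B₁,...,B_k of C^d (each an orthonormal basis of d vectors). Suppose that for every choice of one vector from each basis there is a vector set forming an order (k,k-1) gadget with those k vectors as distinguished vectors (i.e., no {0,1}-coloring of that set assigns 1 to all k distinguished vectors). Then the union of all bases and all gadget sets admits no {0,1}-coloring: assigning exactly one value 1 in each of B₁,...,B_{k-1} forces all d vectors of B_k to be assigned 0, contradicting completeness. -/

import Mathlib

/-- A {0,1}-coloring of a set of vectors in `ℂ^d`: orthogonal vectors are never both
assigned 1, and every set of `d` mutually orthogonal vectors in the set contains exactly
one vector assigned 1. -/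
def IsColoringVec (d : ℕ) (S : Set (EuclideanSpace ℂ (Fin d)))
    (f : EuclideanSpace ℂ (Fin d) → Bool) : Prop :=
  (∀ u ∈ S, ∀ v ∈ S, (inner ℂ u v : ℂ) = 0 → ¬ (f u = true ∧ f v = true)) ∧
  (∀ T : Finset (EuclideanSpace ℂ (Fin d)), ↑T ⊆ S → T.card = d →
    (∀ u ∈ T, ∀ v ∈ T, u ≠ v → (inner ℂ u v : ℂ) = 0) →
    (T.filter (fun v => f v = true)).card = 1)

/-- Construction 1: given `k` orthonormal bases of `ℂ^d` and, for every choice of one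
vector from each basis, an order `(k,k-1)` gadget set with those vectors distinguished
(so that no {0,1}-coloring of the combined set assigns 1 to all of them), the union of
all bases and all gadget sets admits no {0,1}-coloring, i.e., it is a Kochen–Specker set. -/
theorem ks_set_from_higher_order_gadgets
    (d k : ℕ) (hd : 0 < d) (hk : 2 ≤ k)
    (B : Fin k → Fin d → EuclideanSpace ℂ (Fin d))
    (hB : ∀ i, Orthonormal ℂ (B i))
    (S : (Fin k → Fin d) → Set (EuclideanSpace ℂ (Fin d)))
    (U : Set (EuclideanSpace ℂ (Fin d)))
    (hU : U = (⋃ c, S c) ∪ ⋃ i, Set.range (B i))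
    (hgad : ∀ c : Fin k → Fin d,
      (∀ i, B i (c i) ∈ S c) ∧
      ∀ f, IsColoringVec d U f → ¬ ∀ i, f (B i (c i)) = true) :
    ¬ ∃ f, IsColoringVec d U f := by
  classical
  rintro ⟨f, hf⟩
  -- for each basis, exactly one vector colored 1
  have key : ∀ i : Fin k, ∃ j : Fin d, f (B i j) = true := by
    intro i
    have hinj : Function.Injective (B i) :=
      (hB i).linearIndependent.injective
    set T : Finset (EuclideanSpace ℂ (Fin d)) :=
      Finset.univ.image (B i) with hT
    have hsub : ↑T ⊆ U := by
      intro v hv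
      simp only [hT, Finset.coe_image, Finset.coe_univ, Set.image_univ] at hv
      rw [hU]
      exact Or.inr (Set.mem_iUnion.2 ⟨i, hv⟩)
    have hcard : T.card = d := by
      rw [hT, Finset.card_image_of_injective _ hinj, Finset.card_univ, Fintype.card_fin]
    have horth : ∀ u ∈ T, ∀ v ∈ T, u ≠ v → (inner ℂ u v : ℂ) = 0 := by
      intro u hu v hv huv
      simp only [hT, Finset.mem_image, Finset.mem_univ, true_and] at hu hv
      obtain ⟨a, rfl⟩ := hu
      obtain ⟨b, rfl⟩ := hv
      exact (hB i).2 (fun h => huv (by rw [h]))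
    have h1 := hf.2 T hsub hcard horth
    obtain ⟨x, hx⟩ := Finset.card_eq_one.1 h1
    have hxmem : x ∈ T.filter (fun v => f v = true) := by rw [hx]; simp
    rw [Finset.mem_filter] at hxmem
    obtain ⟨hxT, hxf⟩ := hxmem
    simp only [hT, Finset.mem_image, Finset.mem_univ, true_and] at hxT
    obtain ⟨j, rfl⟩ := hxT
    exact ⟨j, hxf⟩
  choose c hc using key
  exact (hgad c).2 f hf hc
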